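/- Let (X,T) be a topological dynamical system (X a compact metric space, T a homeomorphism of X) and let π : X → Z be a continuous surjection onto a compact metric space Z of fixed points, meaning π∘T = π. Then the set Ω = {z ∈ Z : π⁻¹(z) contains a unique minimal subset} is a Gδ subset of Z. -/

import Mathlib

open Filter Topology Set

/-- A map between topological spaces is *semiopen* if the image of every
nonempty open set has nonempty interior. -/
def SemiOpen {X Y : Type*} [TopologicalSpace X] [TopologicalSpace Y] (f : X → Y) : Prop :=
  ∀ U : Set X, IsOpen U → U.Nonempty → (interior (f '' U)).Nonempty

/-- The `n`-th iterate (`n : ℤ`) of a homeomorphism. -/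
def zIter {X : Type*} [TopologicalSpace X] (T : X ≃ₜ X) (n : ℤ) : X → X :=
  fun x => (T.toEquiv ^ n) x

/-- The two-sided orbit of a point under a homeomorphism. -/
def zOrbit {X : Type*} [TopologicalSpace X] (T : X ≃ₜ X) (x : X) : Set X :=
  Set.range fun n : ℤ => zIter T n x

/-- A system is minimal if every orbit is dense. -/
def IsMinimalSystem {X : Type*} [TopologicalSpace X] (T : X ≃ₜ X) : Prop :=
  ∀ x : X, Dense (zOrbit T x)

/-- A minimal subset: nonempty, closed, invariant, with no proper nonempty
closed invariant subset. -/
def IsMinimalSubset {X : Type*} [TopologicalSpace X] (T : X ≃ₜ X) (M : Set X) : Prop :=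
  M.Nonempty ∧ IsClosed M ∧ T '' M = M ∧
    ∀ M' ⊆ M, M'.Nonempty → IsClosed M' → T '' M' = M' → M' = M

/-- A factor map between systems. -/
def IsFactorMap {X Y : Type*} [TopologicalSpace X] [TopologicalSpace Y]
    (T : X ≃ₜ X) (S : Y ≃ₜ Y) (f : X → Y) : Prop :=
  Continuous f ∧ Function.Surjective f ∧ ∀ x, f (T x) = S (f x)

/-- The regionally proximal relation. -/
def RP {X : Type*} [MetricSpace X] (T : X ≃ₜ X) : Set (X × X) :=
  {p | ∃ (u v : ℕ → X) (n : ℕ → ℤ),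
    Tendsto u atTop (𝓝 p.1) ∧ Tendsto v atTop (𝓝 p.2) ∧
    Tendsto (fun i => dist (zIter T (n i) (u i)) (zIter T (n i) (v i))) atTop (𝓝 0)}

/-- A joining of two systems: a closed invariant subset of the product with
full projections onto both coordinates. -/
def IsJoining {X Y : Type*} [TopologicalSpace X] [TopologicalSpace Y]
    (T : X ≃ₜ X) (S : Y ≃ₜ Y) (J : Set (X × Y)) : Prop :=
  IsClosed J ∧ (T.prodCongr S) '' J = J ∧
    Prod.fst '' J = Set.univ ∧ Prod.snd '' J = Set.univ

/-- `J` projects onto `X_eq × Y_eq`: phrased via the regionally proximal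
relation, every product of RP-cells meets `J`. -/
def FullEqProjection {X Y : Type*} [MetricSpace X] [MetricSpace Y]
    (T : X ≃ₜ X) (S : Y ≃ₜ Y) (J : Set (X × Y)) : Prop :=
  ∀ x : X, ∀ y : Y, ∃ p ∈ J, (x, p.1) ∈ RP T ∧ (y, p.2) ∈ RP S

/-- Two minimal systems are quasi-disjoint if the full product is the only
joining projecting onto the product of the maximal equicontinuous factors. -/
def QuasiDisjoint {X Y : Type*} [MetricSpace X] [MetricSpace Y]
    (T : X ≃ₜ X) (S : Y ≃ₜ Y) : Prop :=
  ∀ J : Set (X × Y), IsJoining T S J → FullEqProjection T S J → J = Set.univ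

/-- Two systems are disjoint if the full product is the only joining. -/
def DisjointSystems {X Y : Type*} [TopologicalSpace X] [TopologicalSpace Y]
    (T : X ≃ₜ X) (S : Y ≃ₜ Y) : Prop :=
  ∀ J : Set (X × Y), IsJoining T S J → J = Set.univ

/-- A system is equicontinuous (with respect to all integer iterates). -/
def EquicontinuousSystem {X : Type*} [MetricSpace X] (T : X ≃ₜ X) : Prop :=
  ∀ ε > (0 : ℝ), ∃ δ > (0 : ℝ), ∀ x₁ x₂ : X, dist x₁ x₂ < δ →
    ∀ n : ℤ, dist (zIter T n x₁) (zIter T n x₂) < ε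

/-- A pair of points is proximal. -/
def ProximalPair {X : Type*} [MetricSpace X] (T : X ≃ₜ X) (x₁ x₂ : X) : Prop :=
  ∀ ε > (0 : ℝ), ∃ n : ℤ, dist (zIter T n x₁) (zIter T n x₂) < ε

section Aux

variable {X : Type*} [TopologicalSpace X]

lemma continuous_zIter (T : X ≃ₜ X) (n : ℤ) : Continuous (zIter T n) := by
  induction n using Int.induction_on with
  | zero => exact (show zIter T 0 = id from funext fun x => by simp [zIter]) ▸ continuous_id
  | succ n ih =>
      have h : zIter T (n + 1) = zIter T n ∘ T := by
        funext x
        simp [zIter, zpow_add_one, Equiv.Perm.mul_apply]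
      rw [h]; exact ih.comp T.continuous
  | pred n ih =>
      have h : zIter T (-(n : ℤ) - 1) = zIter T (-(n : ℤ)) ∘ T.symm := by
        funext x
        simp [zIter, zpow_sub_one, Equiv.Perm.mul_apply]
      rw [h]; exact ih.comp T.symm.continuous

lemma zIter_mem (T : X ≃ₜ X) {M : Set X} (hM : T '' M = M) :
    ∀ n : ℤ, ∀ x ∈ M, zIter T n x ∈ M := by
  have hT : ∀ x ∈ M, T x ∈ M := fun x hx => hM ▸ Set.mem_image_of_mem _ hx
  have hTs : ∀ x ∈ M, T.symm x ∈ M := by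
    intro x hx
    rw [← hM] at hx
    obtain ⟨y, hy, rfl⟩ := hx
    simpa using hy
  intro n
  induction n using Int.induction_on with
  | zero => intro x hx; simpa [zIter] using hx
  | succ n ih =>
      intro x hx
      have h : zIter T (n + 1) x = zIter T n (T x) := by
        simp [zIter, zpow_add_one, Equiv.Perm.mul_apply]
      rw [h]; exact ih _ (hT x hx)
  | pred n ih =>
      intro x hx
      have h : zIter T (-(n : ℤ) - 1) x = zIter T (-(n : ℤ)) (T.symm x) := by
        simp [zIter, zpow_sub_one, Equiv.Perm.mul_apply]
      rw [h]; exact ih _ (hTs x hx)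

lemma image_zOrbit (T : X ≃ₜ X) (x : X) : T '' zOrbit T x = zOrbit T x := by
  apply Set.Subset.antisymm
  · rintro _ ⟨_, ⟨n, rfl⟩, rfl⟩
    refine ⟨1 + n, ?_⟩
    simp [zIter, zpow_add, Equiv.Perm.mul_apply]
  · rintro _ ⟨n, rfl⟩
    refine ⟨zIter T (n - 1) x, ⟨n - 1, rfl⟩, ?_⟩
    have : ((T.toEquiv : Equiv.Perm X) ^ n) x
        = ((T.toEquiv : Equiv.Perm X) ^ (1 + (n - 1))) x := by ring_nf
    simp only [zIter]
    rw [this, zpow_add, Equiv.Perm.mul_apply, zpow_one]; rfl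

lemma exists_minimal_subset {X : Type*} [TopologicalSpace X] [CompactSpace X] [T2Space X]
    (T : X ≃ₜ X) {F : Set X} (hne : F.Nonempty) (hcl : IsClosed F) (hinv : T '' F = F) :
    ∃ M, M ⊆ F ∧ IsMinimalSubset T M := by
  set S : Set (Set X) := {M | M ⊆ F ∧ M.Nonempty ∧ IsClosed M ∧ T '' M = M} with hS
  have hFS : F ∈ S := ⟨Set.Subset.rfl, hne, hcl, hinv⟩
  have H : ∀ c ⊆ S, IsChain (· ⊆ ·) c → c.Nonempty → ∃ lb ∈ S, ∀ s ∈ c, lb ⊆ s := by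
    intro c hcS hchain hcne
    refine ⟨⋂₀ c, ⟨?_, ?_, ?_, ?_⟩, fun s hs => Set.sInter_subset_of_mem hs⟩
    · obtain ⟨s, hs⟩ := hcne
      exact (Set.sInter_subset_of_mem hs).trans (hcS hs).1
    · haveI : Nonempty c := hcne.to_subtype
      have hdir : DirectedOn (· ⊇ ·) c := by
        intro U hU V hV
        rcases hchain.total hU hV with h | h
        · exact ⟨U, hU, Set.Subset.rfl, h⟩
        · exact ⟨V, hV, h, Set.Subset.rfl⟩
      exact IsCompact.nonempty_sInter_of_directed_nonempty_isCompact_isClosed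
        hdir (fun U hU => (hcS hU).2.1)
        (fun U hU => (hcS hU).2.2.1.isCompact) (fun U hU => (hcS hU).2.2.1)
    · exact isClosed_sInter fun s hs => (hcS hs).2.2.1
    · rw [Set.sInter_eq_iInter, Set.image_iInter T.bijective]
      exact Set.iInter_congr fun s : c => (hcS s.2).2.2.2
  obtain ⟨m, hmF, hmin⟩ := zorn_superset_nonempty S H F hFS
  obtain ⟨hmF', hmne, hmcl, hminv⟩ := hmin.prop
  refine ⟨m, hmF', hmne, hmcl, hminv, ?_⟩
  intro M' hM'm hM'ne hM'cl hM'inv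
  have hM'S : M' ∈ S := ⟨hM'm.trans hmF', hM'ne, hM'cl, hM'inv⟩
  exact Set.Subset.antisymm hM'm (hmin.2 hM'S hM'm)

end Aux

lemma isOpen_aux {X Z : Type*} [MetricSpace X] [CompactSpace X]
    [MetricSpace Z] (T : X ≃ₜ X) (π : X → Z) (hcont : Continuous π) (e : ℝ) :
    IsOpen {z : Z | ∀ x, π x = z → ∀ y, π y = z →
      ∃ m k : ℤ, dist (zIter T m x) (zIter T k y) < e} := by
  set K : Set (X × X) :=
    {p | π p.1 = π p.2} ∩ ⋂ (m : ℤ) (k : ℤ),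
      {p | e ≤ dist (zIter T m p.1) (zIter T k p.2)} with hK
  have hKcl : IsClosed K := by
    refine IsClosed.inter
      (isClosed_eq (hcont.comp continuous_fst) (hcont.comp continuous_snd)) ?_
    exact isClosed_iInter fun m => isClosed_iInter fun k =>
      isClosed_le continuous_const
        (Continuous.dist ((continuous_zIter T m).comp continuous_fst)
          ((continuous_zIter T k).comp continuous_snd))
  have hcompl : {z : Z | ∀ x, π x = z → ∀ y, π y = z →
      ∃ m k : ℤ, dist (zIter T m x) (zIter T k y) < e}
      = ((fun p : X × X => π p.1) '' K)ᶜ := by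
    ext z
    constructor
    · intro hz hmem
      obtain ⟨p, ⟨hpe, hpk⟩, hpz⟩ := hmem
      simp only [Set.mem_iInter, Set.mem_setOf_eq] at hpk
      obtain ⟨m, k, hmk⟩ := hz p.1 hpz p.2 (hpe ▸ hpz)
      exact absurd hmk (not_lt.mpr (hpk m k))
    · intro h x hx y hy
      by_contra hcon
      push_neg at hcon
      refine h ⟨(x, y), ⟨hx.trans hy.symm, ?_⟩, hx⟩
      simp only [Set.mem_iInter, Set.mem_setOf_eq]
      exact fun m k => hcon m k
  rw [hcompl]
  exact ((hKcl.isCompact.image (hcont.comp continuous_fst)).isClosed).isOpen_compl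

/-- if π : X → Z is a continuous surjection with π ∘ T = π, then
the set of z whose fiber contains a unique minimal subset is Gδ. -/
theorem stmt3 {X Z : Type*} [MetricSpace X] [CompactSpace X]
    [MetricSpace Z] [CompactSpace Z] (T : X ≃ₜ X) (π : X → Z)
    (hcont : Continuous π) (hsurj : Function.Surjective π)
    (hfix : ∀ x, π (T x) = π x) :
    IsGδ {z : Z | ∃! M : Set X, M ⊆ π ⁻¹' {z} ∧ IsMinimalSubset T M} := by
  have hfibinv : ∀ z : Z, T '' (π ⁻¹' {z}) = π ⁻¹' {z} := by
    intro z
    apply Set.Subset.antisymm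
    · rintro _ ⟨x, hx, rfl⟩
      simpa [Set.mem_preimage, hfix] using hx
    · intro x hx
      refine ⟨T.symm x, ?_, T.apply_symm_apply x⟩
      have : π (T.symm x) = π x := by
        conv_rhs => rw [← T.apply_symm_apply x]
        rw [hfix]
      simpa [Set.mem_preimage, this] using hx
  have hπiter : ∀ (w : X) (k : ℤ), π (zIter T k w) = π w := by
    intro w k
    have : zIter T k w ∈ π ⁻¹' {π w} :=
      zIter_mem T (hfibinv (π w)) k w (by simp [Set.mem_preimage])
    simpa [Set.mem_preimage] using this
  have heq : {z : Z | ∃! M : Set X, M ⊆ π ⁻¹' {z} ∧ IsMinimalSubset T M}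
      = ⋂ n : ℕ, {z : Z | ∀ x, π x = z → ∀ y, π y = z →
          ∃ m k : ℤ, dist (zIter T m x) (zIter T k y) < 1 / (n + 1)} := by
    ext z
    simp only [Set.mem_setOf_eq, Set.mem_iInter]
    constructor
    · rintro ⟨M, ⟨hMsub, hMmin⟩, huniq⟩ n x hx y hy
      have hεpos : (0 : ℝ) < 1 / (n + 1) := by positivity
      have hsub : ∀ w : X, π w = z → closure (zOrbit T w) ⊆ π ⁻¹' {z} := by
        intro w hw
        apply closure_minimal _ (IsClosed.preimage hcont isClosed_singleton)
        rintro _ ⟨k, rfl⟩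
        simp [Set.mem_preimage, zOrbit, hπiter w k, hw]
      have hcl : ∀ w : X, ∃ Mw, Mw ⊆ closure (zOrbit T w) ∧ IsMinimalSubset T Mw := by
        intro w
        apply exists_minimal_subset T
        · exact ⟨w, subset_closure ⟨0, by simp [zIter]⟩⟩
        · exact isClosed_closure
        · rw [T.image_closure, image_zOrbit]
      obtain ⟨Mx, hMxsub, hMxmin⟩ := hcl x
      obtain ⟨My, hMysub, hMymin⟩ := hcl y
      have hMx : Mx = M := huniq Mx ⟨hMxsub.trans (hsub x hx), hMxmin⟩
      have hMy : My = M := huniq My ⟨hMysub.trans (hsub y hy), hMymin⟩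
      obtain ⟨p, hp⟩ := hMmin.1
      have hpx : p ∈ closure (zOrbit T x) := hMxsub (hMx ▸ hp)
      have hpy : p ∈ closure (zOrbit T y) := hMysub (hMy ▸ hp)
      have hhalf : (0 : ℝ) < 1 / (n + 1) / 2 := by positivity
      obtain ⟨a, ⟨m, rfl⟩, ham⟩ := Metric.mem_closure_iff.mp hpx _ hhalf
      obtain ⟨b, ⟨k, rfl⟩, hbk⟩ := Metric.mem_closure_iff.mp hpy _ hhalf
      refine ⟨m, k, ?_⟩
      calc dist (zIter T m x) (zIter T k y)
          ≤ dist (zIter T m x) p + dist p (zIter T k y) := dist_triangle _ _ _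
        _ < 1 / (n + 1) / 2 + 1 / (n + 1) / 2 := by
            rw [dist_comm] at ham; exact add_lt_add ham hbk
        _ = 1 / (n + 1) := by ring
    · intro hz
      obtain ⟨x₀, hx₀⟩ := hsurj z
      obtain ⟨M, hMF, hMmin⟩ := exists_minimal_subset T ⟨x₀, hx₀⟩
        (IsClosed.preimage hcont isClosed_singleton) (hfibinv z)
      refine ⟨M, ⟨hMF, hMmin⟩, ?_⟩
      rintro M' ⟨hM'F, hM'min⟩
      obtain ⟨x, hx⟩ := hM'min.1
      obtain ⟨y, hy⟩ := hMmin.1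
      have hxz : π x = z := hM'F hx
      have hyz : π y = z := hMF hy
      have key : ∀ n : ℕ, ∃ a ∈ M', ∃ b ∈ M, dist a b < 1 / (n + 1) := by
        intro n
        obtain ⟨m, k, h⟩ := hz n x hxz y hyz
        exact ⟨_, zIter_mem T hM'min.2.2.1 m x hx, _, zIter_mem T hMmin.2.2.1 k y hy, h⟩
      choose a ha b hb hab using key
      obtain ⟨p, hpM', φ, hφ, hconv⟩ := hM'min.2.1.isCompact.tendsto_subseq ha
      have h1 : Filter.Tendsto (fun i => (1 : ℝ) / (φ i + 1)) Filter.atTop (𝓝 0) :=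
        tendsto_one_div_add_atTop_nhds_zero_nat.comp hφ.tendsto_atTop
      have h2 : Filter.Tendsto (fun i => dist (a (φ i)) p) Filter.atTop (𝓝 0) :=
        tendsto_iff_dist_tendsto_zero.mp hconv
      have hbconv : Filter.Tendsto (fun i => b (φ i)) Filter.atTop (𝓝 p) := by
        rw [tendsto_iff_dist_tendsto_zero]
        have hbound : ∀ i, dist (b (φ i)) p ≤ 1 / (φ i + 1) + dist (a (φ i)) p := by
          intro i
          calc dist (b (φ i)) p ≤ dist (b (φ i)) (a (φ i)) + dist (a (φ i)) p :=
              dist_triangle _ _ _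
            _ ≤ 1 / (φ i + 1) + dist (a (φ i)) p := by
                have := (hab (φ i)).le
                rw [dist_comm]
                exact add_le_add this le_rfl
        exact squeeze_zero (fun i => dist_nonneg) hbound (by simpa using h1.add h2)
      have hpM : p ∈ M := hMmin.2.1.mem_of_tendsto hbconv
        (Filter.Eventually.of_forall fun i => hb (φ i))
      have hint : (M' ∩ M).Nonempty := ⟨p, hpM', hpM⟩
      have hintcl : IsClosed (M' ∩ M) := hM'min.2.1.inter hMmin.2.1
      have hintinv : T '' (M' ∩ M) = M' ∩ M := by
        rw [Set.image_inter T.injective, hM'min.2.2.1, hMmin.2.2.1]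
      have e1 := hM'min.2.2.2 (M' ∩ M) Set.inter_subset_left hint hintcl hintinv
      have e2 := hMmin.2.2.2 (M' ∩ M) Set.inter_subset_right hint hintcl hintinv
      rw [← e1, e2]
  rw [heq]
  exact IsGδ.iInter_of_isOpen fun n => isOpen_aux T π hcont _
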